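/- arXiv:1105.4746 — 2 statements merged into one kernel-verified Lean document; each statement's English description precedes it below -/
import Mathlib

section
/- Let p : ℝ^{2n} → ℂ be continuous and z ∈ ℂ. Suppose the restriction of p to each ray r ↦ p(x, rξ), |ξ| = 1, is a polynomial of degree exactly m in r with leading coefficient bounded away from 0 on a compact set K of (x, ξ) with |ξ| = 1. Then the volume function V_z(t) = vol{ρ ∈ K' : |p(ρ) − z|² ≤ t} (K' the cone over K intersected with a bounded set) satisfies V_z(t) = O(t^{1/(2m)}) as t → 0⁺. -/
open MeasureTheory

open Polynomial
open scoped ENNReal NNReal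

noncomputable abbrev Eu (n : ℕ) := EuclideanSpace ℝ (Fin n)

lemma norm_msprod (s : Multiset ℂ) : ‖s.prod‖ = (s.map (fun z => ‖z‖)).prod := by
  induction s using Multiset.induction with
  | empty => simp
  | cons a s ih => simp [norm_mul, ih]

lemma aux_prod_le {r δ : ℝ} (hδ : 0 ≤ δ) (s : Multiset ℂ)
    (h : ∀ ζ ∈ s, δ ≤ ‖(r : ℂ) - ζ‖) :
    δ ^ Multiset.card s ≤ (s.map fun ζ => ‖(r : ℂ) - ζ‖).prod := by
  induction s using Multiset.induction with
  | empty => simp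
  | cons a s ih =>
    simp only [Multiset.map_cons, Multiset.prod_cons, Multiset.card_cons]
    rw [pow_succ']
    exact mul_le_mul (h a (Multiset.mem_cons_self a s))
      (ih fun ζ hζ => h ζ (Multiset.mem_cons_of_mem hζ)) (pow_nonneg hδ _)
      (le_trans hδ (h a (Multiset.mem_cons_self a s)))

lemma aux_prod_lt {r δ : ℝ} (hδ : 0 ≤ δ) (s : Multiset ℂ) (hs : s ≠ 0)
    (h : ∀ ζ ∈ s, δ < ‖(r : ℂ) - ζ‖) :
    δ ^ Multiset.card s < (s.map fun ζ => ‖(r : ℂ) - ζ‖).prod := by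
  obtain ⟨a, ha⟩ := Multiset.exists_mem_of_ne_zero hs
  obtain ⟨t, rfl⟩ : ∃ t, s = a ::ₘ t := ⟨s.erase a, (Multiset.cons_erase ha).symm⟩
  simp only [Multiset.map_cons, Multiset.prod_cons, Multiset.card_cons]
  have hpos : 0 < (t.map fun ζ => ‖(r : ℂ) - ζ‖).prod := by
    apply Multiset.prod_pos
    intro x hx
    obtain ⟨ζ, hζ, rfl⟩ := Multiset.mem_map.1 hx
    exact lt_of_le_of_lt hδ (h ζ (Multiset.mem_cons_of_mem hζ))
  calc δ ^ (Multiset.card t + 1) = δ ^ Multiset.card t * δ := pow_succ _ _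
    _ ≤ (t.map fun ζ => ‖(r : ℂ) - ζ‖).prod * δ :=
        mul_le_mul_of_nonneg_right
          (aux_prod_le hδ t fun ζ hζ => (h ζ (Multiset.mem_cons_of_mem hζ)).le) hδ
    _ < (t.map fun ζ => ‖(r : ℂ) - ζ‖).prod * ‖(r : ℂ) - a‖ :=
        (mul_lt_mul_of_pos_left (h a (Multiset.mem_cons_self a t)) hpos)
    _ = ‖(r : ℂ) - a‖ * (t.map fun ζ => ‖(r : ℂ) - ζ‖).prod := mul_comm _ _

lemma oneD (m : ℕ) (hm : 1 ≤ m) (b : ℕ → ℂ) (c : ℝ) (hc : 0 < c) (hb : c ≤ ‖b m‖)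
    (s : ℝ) (hs : 0 ≤ s) :
    volume {r : ℝ | ‖∑ i ∈ Finset.range (m + 1), b i * (r : ℂ) ^ i‖ ≤ s} ≤
      (m : ℝ≥0∞) * ENNReal.ofReal (2 * (s / c) ^ (1 / (m : ℝ))) := by
  have hm0 : (m : ℝ) ≠ 0 := Nat.cast_ne_zero.2 (by omega)
  set δ := (s / c) ^ (1 / (m : ℝ)) with hδdef
  have hδ0 : 0 ≤ δ := Real.rpow_nonneg (div_nonneg hs hc.le) _
  have hδm : c * δ ^ m = s := by
    rw [hδdef, ← Real.rpow_natCast ((s / c) ^ (1 / (m : ℝ))) m, ← Real.rpow_mul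
      (div_nonneg hs hc.le), one_div_mul_cancel hm0, Real.rpow_one, mul_div_cancel₀ _ hc.ne']
  set Q : Polynomial ℂ := ∑ i ∈ Finset.range (m + 1), Polynomial.C (b i) * Polynomial.X ^ i
    with hQdef
  have hbm0 : b m ≠ 0 := fun h => by simp [h] at hb; exact absurd hb (not_le.2 hc)
  have hcoeff : Q.coeff m = b m := by
    simp [hQdef, Polynomial.finset_sum_coeff, Polynomial.coeff_C_mul, Polynomial.coeff_X_pow,
      Finset.sum_ite_eq' (Finset.range (m + 1)) m]
  have hdegle : Q.natDegree ≤ m := by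
    apply Polynomial.natDegree_sum_le_of_forall_le
    intro i hi
    exact (Polynomial.natDegree_C_mul_le _ _).trans
      (by simpa using Nat.lt_succ_iff.1 (Finset.mem_range.1 hi))
  have hdeg : Q.natDegree = m :=
    le_antisymm hdegle (Polynomial.le_natDegree_of_ne_zero (hcoeff ▸ hbm0))
  have hlc : Q.leadingCoeff = b m := by rw [Polynomial.leadingCoeff, hdeg, hcoeff]
  have hsplits : Q.Splits := IsAlgClosed.splits Q
  have hcard : Multiset.card Q.roots = m := by
    rw [← hdeg]; exact (Polynomial.splits_iff_card_roots.mp hsplits)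
  have heval : ∀ r : ℝ, Q.eval (r : ℂ) = ∑ i ∈ Finset.range (m + 1), b i * (r : ℂ) ^ i := by
    intro r; simp [hQdef, Polynomial.eval_finset_sum]
  have hfac : ∀ r : ℝ, ‖Q.eval (r : ℂ)‖ =
      ‖b m‖ * (Q.roots.map fun ζ => ‖(r : ℂ) - ζ‖).prod := by
    intro r
    conv_lhs => rw [Polynomial.Splits.eq_prod_roots hsplits]
    rw [Polynomial.eval_mul, Polynomial.eval_C, norm_mul, hlc, Polynomial.eval_multiset_prod]
    rw [Multiset.map_map, norm_msprod, Multiset.map_map]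
    congr 2
    ext ζ
    simp
  have key : ∀ r : ℝ, ‖∑ i ∈ Finset.range (m + 1), b i * (r : ℂ) ^ i‖ ≤ s →
      ∃ ζ ∈ Q.roots, |r - ζ.re| ≤ δ := by
    intro r hr
    by_contra hcon
    push_neg at hcon
    have h1 : ∀ ζ ∈ Q.roots, δ < ‖(r : ℂ) - ζ‖ := by
      intro ζ hζ
      refine lt_of_lt_of_le (hcon ζ hζ) ?_
      have := Complex.abs_re_le_norm ((r : ℂ) - ζ)
      simpa [Complex.sub_re] using this
    have hne : Q.roots ≠ 0 := by
      intro h; rw [h] at hcard; simp at hcard; omega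
    have h2 := aux_prod_lt hδ0 Q.roots hne h1
    rw [hcard] at h2
    have h3 : c * δ ^ m < ‖Q.eval (r : ℂ)‖ := by
      rw [hfac r]
      calc c * δ ^ m < c * (Q.roots.map fun ζ => ‖(r : ℂ) - ζ‖).prod :=
            mul_lt_mul_of_pos_left h2 hc
        _ ≤ ‖b m‖ * (Q.roots.map fun ζ => ‖(r : ℂ) - ζ‖).prod := by
            apply mul_le_mul_of_nonneg_right hb
            refine le_trans (pow_nonneg hδ0 m) h2.le
    rw [heval r, hδm] at h3
    exact absurd hr (not_le.2 h3)
  calc volume {r : ℝ | ‖∑ i ∈ Finset.range (m + 1), b i * (r : ℂ) ^ i‖ ≤ s}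
      ≤ volume (⋃ ζ ∈ Q.roots.toFinset, Metric.closedBall ζ.re δ) := by
        apply measure_mono
        intro r hr
        obtain ⟨ζ, hζ, hclose⟩ := key r hr
        exact Set.mem_biUnion (Multiset.mem_toFinset.2 hζ) (by
          simpa [Real.dist_eq] using hclose)
    _ ≤ ∑ ζ ∈ Q.roots.toFinset, volume (Metric.closedBall ζ.re δ) :=
        measure_biUnion_finset_le _ _
    _ = Q.roots.toFinset.card • ENNReal.ofReal (2 * δ) := by
        simp [Real.volume_closedBall, Finset.sum_const]
    _ ≤ (m : ℝ≥0∞) * ENNReal.ofReal (2 * δ) := by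
        rw [nsmul_eq_mul]
        apply mul_le_mul_left
        exact_mod_cast (Multiset.toFinset_card_le _).trans (le_of_eq hcard)

/-- Volume bound with exponent `κ = 1/(2m)` for elliptic symbols. Let `p : ℝⁿ × ℝⁿ → ℂ` be
continuous, and suppose on a compact set `K` of points `(x, ξ)` with `‖ξ‖ = 1` each radial
restriction `r ↦ p (x, r ξ)` is a polynomial of degree `m` in `r` whose leading coefficient
is bounded below by `c > 0`. Then, with `K'` the cone over `K` intersected with a bounded
set, `V_z(t) = vol {ρ ∈ K' : |p(ρ) − z|² ≤ t}` satisfies `V_z(t) = O(t^{1/(2m)})`,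
`0 < t ≤ 1`. -/
theorem volume_bound_elliptic_symbol
    {n m : ℕ} (hm : 1 ≤ m)
    (p : EuclideanSpace ℝ (Fin n) × EuclideanSpace ℝ (Fin n) → ℂ)
    (hp : Continuous p) (z : ℂ)
    (K : Set (EuclideanSpace ℝ (Fin n) × EuclideanSpace ℝ (Fin n)))
    (hK : IsCompact K) (hKsphere : ∀ w ∈ K, ‖w.2‖ = 1)
    (a : EuclideanSpace ℝ (Fin n) × EuclideanSpace ℝ (Fin n) → ℕ → ℂ)
    (hpoly : ∀ w ∈ K, ∀ r : ℝ,
      p (w.1, r • w.2) = ∑ i ∈ Finset.range (m + 1), a w i * (r : ℂ) ^ i)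
    (c : ℝ) (hc : 0 < c) (hlead : ∀ w ∈ K, c ≤ ‖a w m‖)
    (R : ℝ) (hR : 0 < R)
    (K' : Set (EuclideanSpace ℝ (Fin n) × EuclideanSpace ℝ (Fin n)))
    (hK' : K' = {ρ | ∃ r : ℝ, 0 ≤ r ∧ ∃ w ∈ K, ρ = (w.1, r • w.2)} ∩ Metric.closedBall 0 R) :
    ∃ C > 0, ∀ t : ℝ, 0 < t → t ≤ 1 →
      volume {ρ ∈ K' | ‖p ρ - z‖ ^ 2 ≤ t} ≤
        ENNReal.ofReal (C * t ^ (1 / (2 * (m : ℝ)))) := by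
  by_cases hKe : K = ∅
  · refine ⟨1, one_pos, fun t ht ht1 => ?_⟩
    have hempty : {ρ ∈ K' | ‖p ρ - z‖ ^ 2 ≤ t} = ∅ := by
      rw [hK', hKe]; ext ρ; simp
    rw [hempty]
    simp
  · obtain ⟨w₀, hw₀⟩ := Set.nonempty_iff_ne_empty.2 hKe
    have hE : Nontrivial (EuclideanSpace ℝ (Fin n)) := by
      refine nontrivial_of_ne w₀.2 0 fun h => ?_
      have := hKsphere w₀ hw₀; rw [h] at this; simp at this
    set k := Module.finrank ℝ (Eu n) - 1 with hkdef
    set Sph := (volume : Measure (Eu n)).toSphere Set.univ with hSphdef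
    have hm0 : (m : ℝ) ≠ 0 := Nat.cast_ne_zero.2 (by omega)
    set P : Set (Eu n) := Prod.fst '' K with hPdef
    have hPcpt : IsCompact P := hK.image continuous_fst
    set M : ℝ≥0∞ := ENNReal.ofReal (R ^ k) *
      ((m : ℝ≥0∞) * ENNReal.ofReal (2 / c ^ (1 / (m : ℝ)))) * Sph * volume P with hMdef
    have hMne : M ≠ ⊤ := by
      rw [hMdef]
      exact ENNReal.mul_ne_top (ENNReal.mul_ne_top (ENNReal.mul_ne_top ENNReal.ofReal_ne_top
        (ENNReal.mul_ne_top (ENNReal.natCast_ne_top m) ENNReal.ofReal_ne_top))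
        (measure_ne_top _ _)) hPcpt.measure_lt_top.ne
    refine ⟨M.toReal + 1, by positivity, fun t ht ht1 => ?_⟩
    -- notation
    set κ := 1 / (2 * (m : ℝ)) with hκdef
    set δ := (Real.sqrt t / c) ^ (1 / (m : ℝ)) with hδdef
    have hδsplit : 2 * δ = 2 / c ^ (1 / (m : ℝ)) * t ^ κ := by
      rw [hδdef, Real.sqrt_eq_rpow, Real.div_rpow (Real.rpow_nonneg ht.le _) hc.le,
        ← Real.rpow_mul ht.le, div_mul_div_comm, one_mul, hκdef]
      ring
    set S := {ρ ∈ K' | ‖p ρ - z‖ ^ 2 ≤ t} with hSdef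
    -- K' is compact
    have hK'cpt : IsCompact K' := by
      have himg : K' = ((fun q : ℝ × ((Eu n) × (Eu n)) => (q.2.1, q.1 • q.2.2)) ''
          (Set.Icc 0 R ×ˢ K)) ∩ Metric.closedBall 0 R := by
        rw [hK']; ext ρ
        simp only [Set.mem_inter_iff, Set.mem_image, Set.mem_prod, Set.mem_Icc,
          Set.mem_setOf_eq]
        constructor
        · rintro ⟨⟨r, hr0, w, hwK, rfl⟩, hball⟩
          refine ⟨⟨(r, w), ⟨⟨hr0, ?_⟩, hwK⟩, rfl⟩, hball⟩
          have h1 : ‖r • w.2‖ ≤ R :=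
            le_trans (norm_snd_le ((w.1, r • w.2) : (Eu n) × (Eu n))) (mem_closedBall_zero_iff.1 hball)
          rwa [norm_smul, hKsphere w hwK, mul_one, Real.norm_eq_abs, abs_of_nonneg hr0] at h1
        · rintro ⟨⟨⟨r, w⟩, ⟨⟨hr0, _⟩, hwK⟩, rfl⟩, hball⟩
          exact ⟨⟨r, hr0, w, hwK, rfl⟩, hball⟩
      rw [himg]
      exact ((isCompact_Icc.prod hK).image (continuous_snd.fst.prodMk (continuous_fst.smul continuous_snd.snd))).inter_right Metric.isClosed_closedBall
    have hScpt : IsCompact S := by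
      have : S = K' ∩ {ρ | ‖p ρ - z‖ ^ 2 ≤ t} := rfl
      rw [this]
      exact hK'cpt.inter_right (isClosed_le ((hp.sub continuous_const).norm.pow 2)
        continuous_const)
    have hS : MeasurableSet S := hScpt.measurableSet
    -- the per-slice bound
    set A : ℝ≥0∞ := ENNReal.ofReal (R ^ k) * ((m : ℝ≥0∞) * ENNReal.ofReal (2 * δ)) * Sph
      with hAdef
    have hslice : ∀ x : (Eu n), volume (Prod.mk x ⁻¹' S) ≤ A := by
      intro x
      set B : Set (Metric.sphere (0 : (Eu n)) 1 × Set.Ioi (0 : ℝ)) :=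
        {q | (x, (q.1 : (Eu n))) ∈ K ∧ (q.2 : ℝ) ≤ R ∧ ‖p (x, (q.2 : ℝ) • (q.1 : (Eu n))) - z‖ ^ 2 ≤ t}
        with hBdef
      have hc1 : Continuous fun q : Metric.sphere (0 : (Eu n)) 1 × Set.Ioi (0 : ℝ) => (q.1 : (Eu n)) :=
        continuous_subtype_val.comp continuous_fst
      have hc2 : Continuous fun q : Metric.sphere (0 : (Eu n)) 1 × Set.Ioi (0 : ℝ) => (q.2 : ℝ) :=
        continuous_subtype_val.comp continuous_snd
      have hBclosed : IsClosed B := by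
        have h1 : IsClosed {q : Metric.sphere (0 : (Eu n)) 1 × Set.Ioi (0 : ℝ) |
            (x, (q.1 : (Eu n))) ∈ K} := hK.isClosed.preimage (continuous_const.prodMk hc1)
        have h2 : IsClosed {q : Metric.sphere (0 : (Eu n)) 1 × Set.Ioi (0 : ℝ) |
            (q.2 : ℝ) ≤ R} := isClosed_le hc2 continuous_const
        have h3 : IsClosed {q : Metric.sphere (0 : (Eu n)) 1 × Set.Ioi (0 : ℝ) |
            ‖p (x, (q.2 : ℝ) • (q.1 : (Eu n))) - z‖ ^ 2 ≤ t} :=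
          isClosed_le (((hp.comp (continuous_const.prodMk (hc2.smul hc1))).sub
            continuous_const).norm.pow 2) continuous_const
        exact (h1.inter (h2.inter h3) : _)
      have hB : MeasurableSet B := hBclosed.measurableSet
      have hsub : (Subtype.val ⁻¹' (Prod.mk x ⁻¹' S) : Set ({(0 : (Eu n))}ᶜ : Set (Eu n))) ⊆
          homeomorphUnitSphereProd (Eu n) ⁻¹' B := by
        rintro ⟨ξ, hξ⟩ hmem
        simp only [Set.mem_preimage] at hmem ⊢
        obtain ⟨hK'mem, hcond⟩ := hmem
        rw [hK'] at hK'mem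
        obtain ⟨⟨r, hr0, w, hwK, heq⟩, hball⟩ := hK'mem
        have hx1 : x = w.1 := congrArg Prod.fst heq
        have hx2 : ξ = r • w.2 := congrArg Prod.snd heq
        have hξ0 : ξ ≠ 0 := hξ
        have hw2 : ‖w.2‖ = 1 := hKsphere w hwK
        have hrpos : 0 < r := by
          rcases hr0.lt_or_eq with h | h
          · exact h
          · exfalso; apply hξ0; rw [hx2, ← h, zero_smul]
        have hnξ : ‖ξ‖ = r := by
          rw [hx2, norm_smul, hw2, mul_one, Real.norm_eq_abs, abs_of_pos hrpos]
        have hdir : ‖ξ‖⁻¹ • ξ = w.2 := by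
          rw [hnξ, hx2, smul_smul, inv_mul_cancel₀ hrpos.ne', one_smul]
        refine ⟨?_, ?_, ?_⟩
        · simp only [homeomorphUnitSphereProd_apply_fst_coe, hdir]
          rw [hx1, Prod.mk.eta]
          exact hwK
        · simp only [homeomorphUnitSphereProd_apply_snd_coe]
          exact le_trans (norm_snd_le ((x, ξ) : (Eu n) × (Eu n))) (mem_closedBall_zero_iff.1 hball)
        · simp only [homeomorphUnitSphereProd_apply_fst_coe,
            homeomorphUnitSphereProd_apply_snd_coe,
            smul_inv_smul₀ (norm_ne_zero_iff.2 hξ0)]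
          exact hcond
      have hMP := (volume : Measure (Eu n)).measurePreserving_homeomorphUnitSphereProd
      have hstep1 : volume (Prod.mk x ⁻¹' S) ≤
          ((volume : Measure (Eu n)).toSphere.prod (Measure.volumeIoiPow k)) B := by
        calc volume (Prod.mk x ⁻¹' S)
            ≤ volume ((Prod.mk x ⁻¹' S) \ {0} ∪ ({0} : Set (Eu n))) :=
              measure_mono (Set.subset_diff_union _ _)
          _ ≤ volume ((Prod.mk x ⁻¹' S) \ {0}) + volume ({0} : Set (Eu n)) := measure_union_le _ _
          _ = volume ((Prod.mk x ⁻¹' S) \ {0}) := by rw [measure_singleton, add_zero]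
          _ = ((volume : Measure (Eu n)).comap Subtype.val)
              (Subtype.val ⁻¹' (Prod.mk x ⁻¹' S) : Set ({(0 : (Eu n))}ᶜ : Set (Eu n))) := by
              rw [comap_subtype_coe_apply (measurableSet_singleton (0 : (Eu n))).compl,
                Set.image_preimage_eq_inter_range, Subtype.range_coe, Set.diff_eq]
          _ ≤ ((volume : Measure (Eu n)).comap Subtype.val)
              (homeomorphUnitSphereProd (Eu n) ⁻¹' B) := measure_mono hsub
          _ = ((volume : Measure (Eu n)).toSphere.prod (Measure.volumeIoiPow k)) B :=
              hMP.measure_preimage hB.nullMeasurableSet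
      have hfiber : ∀ θ : Metric.sphere (0 : (Eu n)) 1,
          Measure.volumeIoiPow k (Prod.mk θ ⁻¹' B) ≤
            ENNReal.ofReal (R ^ k) * ((m : ℝ≥0∞) * ENNReal.ofReal (2 * δ)) := by
        intro θ
        by_cases hθK : ((x, (θ : (Eu n))) : (Eu n) × (Eu n)) ∈ K
        · have hFmeas : MeasurableSet (Prod.mk θ ⁻¹' B) := measurable_prodMk_left hB
          set b : ℕ → ℂ := fun i => if i = 0 then a (x, (θ : (Eu n))) 0 - z else a (x, (θ : (Eu n))) i
            with hbdef
          have hbm : b m = a (x, (θ : (Eu n))) m := by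
            rw [hbdef]; simp only; rw [if_neg (by omega)]
          have hsum : ∀ r' : ℝ, ∑ i ∈ Finset.range (m + 1), b i * (r' : ℂ) ^ i =
              (∑ i ∈ Finset.range (m + 1), a (x, (θ : (Eu n))) i * (r' : ℂ) ^ i) - z := by
            intro r'
            have hterm : ∀ i ∈ Finset.range (m + 1), b i * (r' : ℂ) ^ i =
                a (x, (θ : (Eu n))) i * (r' : ℂ) ^ i - (if i = 0 then z else 0) := by
              intro i _
              by_cases hi : i = 0
              · subst hi; simp [hbdef, sub_mul]
              · simp [hbdef, hi]
            rw [Finset.sum_congr rfl hterm, Finset.sum_sub_distrib,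
              Finset.sum_ite_eq' (Finset.range (m + 1)) 0 (fun _ => z)]
            simp
          rw [Measure.volumeIoiPow, withDensity_apply _ hFmeas]
          calc ∫⁻ r in Prod.mk θ ⁻¹' B, ENNReal.ofReal ((r : ℝ) ^ k)
                ∂(Measure.comap Subtype.val volume)
              ≤ ∫⁻ _ in Prod.mk θ ⁻¹' B, ENNReal.ofReal (R ^ k)
                ∂(Measure.comap Subtype.val volume) := by
                refine setLIntegral_mono measurable_const fun r hr => ?_
                exact ENNReal.ofReal_le_ofReal (pow_le_pow_left₀ (le_of_lt r.2) hr.2.1 k)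
            _ = ENNReal.ofReal (R ^ k) *
                (Measure.comap Subtype.val volume) (Prod.mk θ ⁻¹' B) :=
                setLIntegral_const _ _
            _ ≤ ENNReal.ofReal (R ^ k) * ((m : ℝ≥0∞) * ENNReal.ofReal (2 * δ)) := by
                apply mul_le_mul_right
                rw [comap_subtype_coe_apply measurableSet_Ioi]
                have hbm' : c ≤ ‖b m‖ := by rw [hbm]; exact hlead _ hθK
                refine le_trans (measure_mono ?_)
                  (oneD m hm b c hc hbm' (Real.sqrt t) (Real.sqrt_nonneg t))
                rintro r' ⟨r, hr, rfl⟩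
                obtain ⟨h1, h2, h3⟩ := hr
                have hpr := hpoly ((x, (θ : (Eu n))) : (Eu n) × (Eu n)) hθK (r : ℝ)
                simp only [Set.mem_setOf_eq]
                rw [hsum, ← hpr]
                have h4 : ‖p (x, (r : ℝ) • (θ : (Eu n))) - z‖ ≤ Real.sqrt t := by
                  rw [← Real.sqrt_sq (norm_nonneg (p (x, (r : ℝ) • (θ : (Eu n))) - z))]
                  exact Real.sqrt_le_sqrt h3
                exact h4
        · have hempty : Prod.mk θ ⁻¹' B = ∅ :=
            Set.eq_empty_iff_forall_notMem.2 fun r hr => hθK hr.1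
          rw [hempty]
          simp
      calc volume (Prod.mk x ⁻¹' S)
          ≤ ((volume : Measure (Eu n)).toSphere.prod (Measure.volumeIoiPow k)) B := hstep1
        _ = ∫⁻ θ, Measure.volumeIoiPow k (Prod.mk θ ⁻¹' B) ∂(volume : Measure (Eu n)).toSphere :=
            Measure.prod_apply hB
        _ ≤ ∫⁻ _, ENNReal.ofReal (R ^ k) * ((m : ℝ≥0∞) * ENNReal.ofReal (2 * δ))
            ∂(volume : Measure (Eu n)).toSphere := lintegral_mono hfiber
        _ = ENNReal.ofReal (R ^ k) * ((m : ℝ≥0∞) * ENNReal.ofReal (2 * δ)) * Sph := by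
            rw [lintegral_const, hSphdef]
    -- assemble
    have hPm : MeasurableSet P := hPcpt.measurableSet
    have htot : volume S ≤ A * volume P := by
      have hprod : volume S = ∫⁻ x, volume (Prod.mk x ⁻¹' S) ∂(volume : Measure (Eu n)) := by
        rw [Measure.volume_eq_prod, Measure.prod_apply hS]
      rw [hprod]
      calc ∫⁻ x, volume (Prod.mk x ⁻¹' S) ∂(volume : Measure (Eu n))
          ≤ ∫⁻ x, P.indicator (fun _ => A) x ∂(volume : Measure (Eu n)) := by
            refine lintegral_mono fun x => ?_
            by_cases hx : x ∈ P
            · rw [Set.indicator_of_mem hx]; exact hslice x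
            · rw [Set.indicator_of_notMem hx]
              have : Prod.mk x ⁻¹' S = ∅ := by
                refine Set.eq_empty_iff_forall_notMem.2 fun ξ hξ => hx ?_
                obtain ⟨hK'mem, _⟩ := hξ
                rw [hK'] at hK'mem
                obtain ⟨⟨r, _, w, hwK, heq⟩, _⟩ := hK'mem
                exact ⟨w, hwK, (congrArg Prod.fst heq).symm⟩
              rw [this, measure_empty]
        _ = A * volume P := lintegral_indicator_const hPm A
    -- final arithmetic
    have hAP : A * volume P = M * ENNReal.ofReal (t ^ κ) := by
      rw [hAdef, hMdef, hδsplit, ENNReal.ofReal_mul (by positivity)]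
      ring
    have hMC : M * ENNReal.ofReal (t ^ κ) ≤
        ENNReal.ofReal ((M.toReal + 1) * t ^ κ) := by
      rw [ENNReal.ofReal_mul (by positivity)]
      apply mul_le_mul_left
      conv_lhs => rw [← ENNReal.ofReal_toReal hMne]
      exact ENNReal.ofReal_le_ofReal (by linarith)
    calc volume S ≤ A * volume P := htot
      _ = M * ENNReal.ofReal (t ^ κ) := hAP
      _ ≤ ENNReal.ofReal ((M.toReal + 1) * t ^ κ) := hMC
end

section
/- Let S be a compact connected real-analytic manifold and F : S → ℝ a non-constant real-analytic function. Then there exists N₀ ∈ ℕ, N₀ ≥ 1, such that for every w ∈ S, some derivative ∇^k F(w) with 1 ≤ k ≤ N₀ is nonzero. -/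
/-- Pointwise: if all derivatives of order `≥ 1` of an analytic function vanish at a point
of a preconnected open set, the function is constant there. -/
lemma aux_pointwise_nonzero_deriv
    {E : Type*} [NormedAddCommGroup E] [NormedSpace ℝ E]
    (U : Set E) (hU : IsOpen U) (hUconn : IsConnected U)
    (F : E → ℝ) (hF : AnalyticOnNhd ℝ F U)
    (hnonconst : ∃ a ∈ U, ∃ b ∈ U, F a ≠ F b)
    {w : E} (hw : w ∈ U) :
    ∃ k : ℕ, 1 ≤ k ∧ iteratedFDeriv ℝ k F w ≠ 0 := by
  by_contra hcon
  push_neg at hcon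
  -- all higher derivatives vanish at w
  have hzero : ∀ k : ℕ, 1 ≤ k → iteratedFDeriv ℝ k F w = 0 := hcon
  obtain ⟨p, r, hr⟩ := hF w hw
  -- F is locally constant near w
  have hloc : ∀ᶠ x in nhds w, F x = F w := by
    have hball : ∀ y ∈ Metric.eball (0 : E) r, F (w + y) = F w := by
      intro y hy
      have hsum := hr.hasSum_iteratedFDeriv hy
      have hsingle : HasSum (fun n : ℕ ↦ (n.factorial : ℝ)⁻¹ • iteratedFDeriv ℝ n F w fun _ ↦ y)
          (((0:ℕ).factorial : ℝ)⁻¹ • iteratedFDeriv ℝ 0 F w fun _ ↦ y) := by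
        apply hasSum_single 0
        intro n hn
        rw [hzero n (Nat.one_le_iff_ne_zero.mpr hn)]
        simp
      have := hsum.unique hsingle
      simpa [iteratedFDeriv_zero_apply] using this
    have : Metric.eball w r ∈ nhds w := EMetric.ball_mem_nhds w hr.r_pos
    filter_upwards [this] with x hx
    have : x - w ∈ Metric.eball (0 : E) r := by
      simpa [Metric.mem_eball, edist_eq_enorm_sub] using hx
    simpa using hball (x - w) this
  -- identity theorem: F is constant on U
  have hconst : Set.EqOn F (fun _ ↦ F w) U := by
    apply hF.eqOn_of_preconnected_of_eventuallyEq (g := fun _ ↦ F w)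
      (analyticOnNhd_const) hUconn.isPreconnected hw
    exact hloc
  obtain ⟨a, ha, b, hb, hab⟩ := hnonconst
  exact hab ((hconst ha).trans (hconst hb).symm)

/-- Let `F` be a non-constant real-analytic function on a connected open set `U` and
`S ⊆ U` compact (e.g. `S` a compact connected analytic manifold). Then there is an
`N₀ ≥ 1` such that at every point `w ∈ S` some derivative `∇^k F(w)` with `1 ≤ k ≤ N₀`
is nonzero. -/
theorem exists_uniform_finite_order_of_analytic_nonconstant
    {E : Type*} [NormedAddCommGroup E] [NormedSpace ℝ E]
    (U : Set E) (hU : IsOpen U) (hUconn : IsConnected U)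
    (F : E → ℝ) (hF : AnalyticOnNhd ℝ F U)
    (hnonconst : ∃ a ∈ U, ∃ b ∈ U, F a ≠ F b)
    (S : Set E) (hS : IsCompact S) (hSU : S ⊆ U) :
    ∃ N₀ : ℕ, 1 ≤ N₀ ∧ ∀ w ∈ S, ∃ k : ℕ, 1 ≤ k ∧ k ≤ N₀ ∧
      iteratedFDeriv ℝ k F w ≠ 0 := by
  -- open cover by "derivative of order k+1 nonzero" sets
  set V : ℕ → Set E := fun k ↦ {x | x ∈ U ∧ iteratedFDeriv ℝ (k + 1) F x ≠ 0} with hV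
  have hVopen : ∀ k, IsOpen (V k) := by
    intro k
    have hcont : ContinuousOn (iteratedFDeriv ℝ (k + 1) F) U :=
      (hF.iteratedFDeriv (k + 1)).continuousOn
    have : V k = U ∩ (iteratedFDeriv ℝ (k + 1) F) ⁻¹' {0}ᶜ := by
      ext x
      simp only [hV, Set.mem_setOf_eq, Set.mem_inter_iff, Set.mem_preimage,
        Set.mem_compl_iff, Set.mem_singleton_iff]
    rw [this]
    exact hcont.isOpen_inter_preimage hU isOpen_compl_singleton
  have hcover : S ⊆ ⋃ k, V k := by
    intro w hwS
    obtain ⟨k, hk1, hkne⟩ := aux_pointwise_nonzero_deriv U hU hUconn F hF hnonconst (hSU hwS)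
    obtain ⟨m, rfl⟩ := Nat.exists_eq_succ_of_ne_zero (Nat.one_le_iff_ne_zero.mp hk1)
    exact Set.mem_iUnion.mpr ⟨m, hSU hwS, hkne⟩
  obtain ⟨t, ht⟩ := hS.elim_finite_subcover V hVopen hcover
  refine ⟨t.sup (· + 1) + 1, le_add_self, fun w hwS ↦ ?_⟩
  have hw' := ht hwS
  rw [Set.mem_iUnion₂] at hw'
  obtain ⟨k, hkt, hwU, hkne⟩ := hw'
  refine ⟨k + 1, Nat.le_add_left 1 k, ?_, hkne⟩
  exact le_trans (Finset.le_sup (f := (· + 1)) hkt) (Nat.le_succ _)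
end
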